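/- Let p, q, r, s, t be integers with gcd(q, r) = gcd(s, t) = 1. The cyclic sequence v_1 = (1,0), v_2 = (0,1), v_3 = (−1,p), v_4 = (q,r), v_5 = (s,t) forms complete fan data of length 5 that is LDP fan data with exactly three singular cones if and only if p ≤ 1, r ≤ min{−1, −pq−2, q−pq−1, −pq+qt−rs+ps+t−1}, t ≤ min{−2, −s−1, qt−rs+r−1}, and 2 ≤ qt−rs. -/

import Mathlib

/-- The determinant `det(u, w) = u₁w₂ − u₂w₁` of two integer vectors. -/
def detZ (u w : ℤ × ℤ) : ℤ := u.1 * w.2 - u.2 * w.1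

/-- The real vector associated to an integer vector. -/
noncomputable def toR2 (u : ℤ × ℤ) : ℝ × ℝ := ((u.1 : ℝ), (u.2 : ℝ))

/-- The cone `ℝ_{≥0} u + ℝ_{≥0} w` spanned by two integer vectors. -/
def coneOf (u w : ℤ × ℤ) : Set (ℝ × ℝ) :=
  {x | ∃ a b : ℝ, 0 ≤ a ∧ 0 ≤ b ∧ x = a • toR2 u + b • toR2 w}

/-- Complete fan data of length `d`: a cyclic sequence of primitive integer vectors with
`det(v_i, v_{i+1}) ≥ 1` whose successive cones cover `ℝ²` and have pairwise disjoint
interiors. -/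
def IsCompleteFanData (d : ℕ) (v : ZMod d → ℤ × ℤ) : Prop :=
  3 ≤ d ∧
  (∀ i, Int.gcd (v i).1 (v i).2 = 1) ∧
  (∀ i, 1 ≤ detZ (v i) (v (i + 1))) ∧
  (⋃ i, coneOf (v i) (v (i + 1))) = Set.univ ∧
  ∀ i j, i ≠ j →
    interior (coneOf (v i) (v (i + 1))) ∩ interior (coneOf (v j) (v (j + 1))) = ∅

/-- `f(i) = det(v_{i−1}, v_i) + det(v_i, v_{i+1}) + det(v_{i+1}, v_{i−1})`. -/
def fanF (d : ℕ) (v : ZMod d → ℤ × ℤ) (i : ZMod d) : ℤ :=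
  detZ (v (i - 1)) (v i) + detZ (v i) (v (i + 1)) + detZ (v (i + 1)) (v (i - 1))

/-- LDP fan data: complete fan data with `f(i) ≥ 1` for all `i`. -/
def IsLDPFanData (d : ℕ) (v : ZMod d → ℤ × ℤ) : Prop :=
  IsCompleteFanData d v ∧ ∀ i, 1 ≤ fanF d v i

/-- The number of singular cones, i.e. indices `i` with `det(v_i, v_{i+1}) ≥ 2`. -/
noncomputable def numSingular (d : ℕ) (v : ZMod d → ℤ × ℤ) : ℕ :=
  {i : ZMod d | 2 ≤ detZ (v i) (v (i + 1))}.ncard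

/-- Equivalence of fan data: some `GL(2, ℤ)` matrix maps the vector set of one
bijectively onto the vector set of the other. -/
def FanEquiv {d₁ d₂ : ℕ} (v : ZMod d₁ → ℤ × ℤ) (w : ZMod d₂ → ℤ × ℤ) : Prop :=
  ∃ M : Matrix (Fin 2) (Fin 2) ℤ, IsUnit M.det ∧
    (fun u : ℤ × ℤ => (M 0 0 * u.1 + M 0 1 * u.2, M 1 0 * u.1 + M 1 1 * u.2)) ''
      Set.range v = Set.range w

/-- The cyclic sequence of length `d − 1` obtained by deleting the vector `v_k`:
it lists `v_{k+1}, v_{k+2}, …, v_{k+d−1}`. -/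
def deleteAt {d : ℕ} (v : ZMod d → ℤ × ℤ) (k : ZMod d) : ZMod (d - 1) → ℤ × ℤ :=
  fun i => v (k + 1 + (i.val : ZMod d))

/-- The cyclic sequence of length `d + 1` obtained by inserting `v_k + v_{k+1}`
between `v_k` and `v_{k+1}`. -/
def insertAt {d : ℕ} (v : ZMod d → ℤ × ℤ) (k : ZMod d) : ZMod (d + 1) → ℤ × ℤ :=
  fun i =>
    if i.val ≤ k.val then v ((i.val : ℕ) : ZMod d)
    else if i.val = k.val + 1 then v k + v (k + 1)
    else v ((i.val - 1 : ℕ) : ZMod d)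

/-- The data `(1,0), (0,1), (−1,p), (q,r), (s,t)`. -/
def data5' (p q r s t : ℤ) : ZMod 5 → ℤ × ℤ := fun i =>
  if i = 0 then (1, 0) else if i = 1 then (0, 1) else if i = 2 then (-1, p)
  else if i = 3 then (q, r) else (s, t)


/-- real determinant -/
def detR (u w : ℝ × ℝ) : ℝ := u.1 * w.2 - u.2 * w.1

lemma mem_coneOf_iff (u w : ℤ × ℤ) (hD : (0:ℤ) < detZ u w) (x : ℝ × ℝ) :
    x ∈ coneOf u w ↔ 0 ≤ detR (toR2 u) x ∧ 0 ≤ detR x (toR2 w) := by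
  have hD' : (0:ℝ) < ((detZ u w : ℤ) : ℝ) := by exact_mod_cast hD
  constructor
  · rintro ⟨a, b, ha, hb, rfl⟩
    constructor
    · have : detR (toR2 u) (a • toR2 u + b • toR2 w) = b * ((detZ u w : ℤ) : ℝ) := by
        simp [detR, toR2, detZ, Prod.smul_def]; ring
      rw [this]; positivity
    · have : detR (a • toR2 u + b • toR2 w) (toR2 w) = a * ((detZ u w : ℤ) : ℝ) := by
        simp [detR, toR2, detZ, Prod.smul_def]; ring
      rw [this]; positivity
  · rintro ⟨h1, h2⟩
    refine ⟨detR x (toR2 w) / ((detZ u w : ℤ) : ℝ), detR (toR2 u) x / ((detZ u w : ℤ) : ℝ),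
      by positivity, by positivity, ?_⟩
    have hd := hD'.ne'
    apply Prod.ext <;> simp [detR, toR2, detZ, Prod.smul_def] at * <;>
    (have hd' : (w.2:ℝ)*u.1 - w.1*u.2 ≠ 0 := by intro h; apply hd; linarith) <;> field_simp <;> ring

lemma isOpen_detR (a b : ℝ) : IsOpen {x : ℝ × ℝ | 0 < a * x.1 + b * x.2} :=
  isOpen_lt continuous_const (by fun_prop)

lemma strict_subset_interior (u w : ℤ × ℤ) (hD : (0:ℤ) < detZ u w) :
    {x : ℝ × ℝ | 0 < detR (toR2 u) x ∧ 0 < detR x (toR2 w)} ⊆ interior (coneOf u w) := by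
  have hopen : IsOpen {x : ℝ × ℝ | 0 < detR (toR2 u) x ∧ 0 < detR x (toR2 w)} := by
    have h1 := isOpen_detR (-(toR2 u).2) ((toR2 u).1)
    have h2 := isOpen_detR ((toR2 w).2) (-(toR2 w).1)
    have e1 : {x : ℝ × ℝ | 0 < -(toR2 u).2 * x.1 + (toR2 u).1 * x.2}
        = {x : ℝ × ℝ | 0 < detR (toR2 u) x} := by
      ext x; simp only [Set.mem_setOf_eq, detR]; constructor <;> intro h <;> linarith
    have e2 : {x : ℝ × ℝ | 0 < (toR2 w).2 * x.1 + -(toR2 w).1 * x.2}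
        = {x : ℝ × ℝ | 0 < detR x (toR2 w)} := by
      ext x; simp only [Set.mem_setOf_eq, detR]; constructor <;> intro h <;> linarith
    rw [e1] at h1; rw [e2] at h2
    exact h1.inter h2
  refine hopen.subset_interior_iff.mpr ?_
  intro x hx
  exact (mem_coneOf_iff u w hD x).mpr ⟨hx.1.le, hx.2.le⟩

lemma interior_empty_of_line (S : Set (ℝ × ℝ)) (c d : ℝ) (hc : c ≠ 0 ∨ d ≠ 0)
    (hS : ∀ x ∈ S, c * x.1 + d * x.2 = 0) : interior S = ∅ := by
  by_contra h
  obtain ⟨x, hx⟩ := Set.nonempty_iff_ne_empty.mpr h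
  obtain ⟨ε, hε, hball⟩ := Metric.isOpen_iff.mp isOpen_interior x hx
  have hcd : 0 < c ^ 2 + d ^ 2 := by
    rcases hc with hc | hc <;> positivity
  set δ : ℝ := ε / 2 / (|c| + |d| + 1) with hδ
  have hden : (0:ℝ) < |c| + |d| + 1 := by positivity
  have hδpos : 0 < δ := by positivity
  have hbound : δ * (|c| + |d|) < ε := by
    have : δ * (|c| + |d| + 1) = ε / 2 := by rw [hδ]; field_simp
    nlinarith
  have hy : (x.1 + δ * c, x.2 + δ * d) ∈ Metric.ball x ε := by
    rw [Metric.mem_ball, Prod.dist_eq]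
    have h1 : dist (x.1 + δ * c) x.1 ≤ δ * (|c| + |d|) := by
      rw [Real.dist_eq, show x.1 + δ * c - x.1 = δ * c by ring, abs_mul, abs_of_pos hδpos]
      nlinarith [abs_nonneg c, abs_nonneg d]
    have h2 : dist (x.2 + δ * d) x.2 ≤ δ * (|c| + |d|) := by
      rw [Real.dist_eq, show x.2 + δ * d - x.2 = δ * d by ring, abs_mul, abs_of_pos hδpos]
      nlinarith [abs_nonneg c, abs_nonneg d]
    exact lt_of_le_of_lt (max_le h1 h2) hbound
  have hyS := hS _ (interior_subset (hball hy))
  have hxS := hS _ (interior_subset hx)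
  simp only at hyS
  nlinarith

section pairs
variable {p q r s t A B : ℝ}

lemma pair02 (hr1 : r ≤ -1) (hr2 : r ≤ -p*q - 2)
    (h0 : 0 ≤ B) (h1 : 0 ≤ A) (h2 : 0 ≤ -B - p*A) (h3 : 0 ≤ r*A - q*B) :
    B = 0 := by
  rcases le_or_gt p 0 with hp0 | hp0
  · have key : (-p*q - r) * B = (-p) * (q*B - r*A) + r * (-B - p*A) := by ring
    nlinarith [mul_nonneg (neg_nonneg.mpr hp0) h3, mul_nonneg (by linarith : (0:ℝ) ≤ -r) h2]
  · nlinarith [mul_nonneg hp0.le h1]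

lemma pair13 (hr1 : r ≤ -1) (hr2 : r ≤ -p*q - 2) (ht1 : t ≤ -2) (hD : 2 ≤ q*t - r*s)
    (h0 : 0 ≤ -A) (h1 : 0 ≤ p*A + B) (h2 : 0 ≤ q*B - r*A) (h3 : 0 ≤ t*A - s*B) :
    q*B - r*A = 0 := by
  have hB : B ≤ 0 := by
    nlinarith [mul_nonneg (by linarith : (0:ℝ) ≤ -r) h3, mul_nonneg (by linarith : (0:ℝ) ≤ -t) h2]
  by_contra hG3
  have hG3 : 0 < q*B - r*A := lt_of_le_of_ne h2 (Ne.symm hG3)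
  rcases eq_or_lt_of_le h0 with hA | hA
  · have hA' : A = 0 := by linarith
    rw [hA'] at h1; simp only [mul_zero, zero_add] at h1
    have hB' : B = 0 := by linarith
    rw [hA', hB'] at hG3; simp at hG3
  · have hA : A < 0 := by linarith
    have hpn : p ≤ 0 := by nlinarith
    have hE : (-t - p*s) ≤ 0 := by
      have key : (-r - p*q) * (s*B - t*A) = (-t - p*s) * (q*B - r*A) - (q*t - r*s) * (-B - p*A) := by
        ring
      nlinarith [mul_nonneg (by linarith : (0:ℝ) ≤ -r - p*q) h3,
        mul_nonneg (by linarith : (0:ℝ) ≤ q*t - r*s) (by linarith : (0:ℝ) ≤ -(-B - p*A))]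
    have hp' : p < 0 := by
      rcases eq_or_lt_of_le hpn with h | h
      · exfalso; rw [← h] at hE; nlinarith
      · exact h
    have hs : s < 0 := by nlinarith
    have hq : q < 0 := by nlinarith [mul_pos (by linarith : (0:ℝ) < -r) (by linarith : (0:ℝ) < -s)]
    have key2 : q*B - r*A = (-q) * (-B - p*A) - (-r - p*q) * (-A) := by ring
    nlinarith [mul_nonneg (by linarith : (0:ℝ) ≤ -q) (by linarith : (0:ℝ) ≤ -(-B - p*A)),
      mul_nonneg (by linarith : (0:ℝ) ≤ -r - p*q) h0]

lemma pair24 (hr1 : r ≤ -1) (ht1 : t ≤ -2) (hD : 2 ≤ q*t - r*s)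
    (h0 : 0 ≤ -B - p*A) (h1 : 0 ≤ r*A - q*B) (h2 : 0 ≤ s*B - t*A) (h3 : 0 ≤ -B) :
    B = 0 := by
  nlinarith [mul_nonneg (by linarith : (0:ℝ) ≤ -r) h2,
    mul_nonneg (by linarith : (0:ℝ) ≤ -t) (by linarith : (0:ℝ) ≤ -(q*B - r*A))]

lemma pair30 (hr1 : r ≤ -1) (ht1 : t ≤ -2) (hD : 2 ≤ q*t - r*s)
    (h0 : 0 ≤ q*B - r*A) (h1 : 0 ≤ t*A - s*B) (h2 : 0 ≤ B) (h3 : 0 ≤ A) :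
    B = 0 := by
  nlinarith [mul_nonneg (by linarith : (0:ℝ) ≤ -r) (by linarith : (0:ℝ) ≤ -(s*B - t*A)),
    mul_nonneg (by linarith : (0:ℝ) ≤ -t) h0]

lemma pair41 (hr1 : r ≤ -1) (hr2 : r ≤ -p*q - 2) (ht1 : t ≤ -2) (hD : 2 ≤ q*t - r*s)
    (h0 : 0 ≤ s*B - t*A) (h1 : 0 ≤ -B) (h2 : 0 ≤ -A) (h3 : 0 ≤ p*A + B) :
    s*B - t*A = 0 := by
  by_contra hG4
  have hG4 : 0 < s*B - t*A := lt_of_le_of_ne h0 (Ne.symm hG4)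
  have hA : A < 0 := by
    rcases eq_or_lt_of_le h2 with h | h
    · exfalso
      have hA' : A = 0 := by linarith
      have hB' : B = 0 := by rw [hA'] at h3; simp at h3; linarith
      rw [hA', hB'] at hG4; simp at hG4
    · linarith
  have htA : 0 < t*A := by nlinarith
  have hsB : 0 < s*B := by nlinarith
  have hB : B < 0 := by
    rcases lt_or_eq_of_le h1 with h | h
    · linarith
    · exfalso
      have hB0 : B = 0 := by linarith
      rw [hB0, mul_zero] at hsB; linarith
  have hs : s < 0 := by nlinarith
  have hp' : p < 0 := by nlinarith
  have hq : q < 0 := by nlinarith [mul_pos (by linarith : (0:ℝ) < -r) (by linarith : (0:ℝ) < -s)]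
  have hG3 : 0 < q*B - r*A := by
    have key : t*(q*B - r*A) = (q*t - r*s)*B + r*(s*B - t*A) := by ring
    nlinarith [mul_pos (by linarith : (0:ℝ) < q*t - r*s) (by linarith : (0:ℝ) < -B),
      mul_pos (by linarith : (0:ℝ) < -r) hG4]
  have key2 : q*B - r*A = (-q) * (-B - p*A) - (-r - p*q) * (-A) := by ring
  nlinarith [mul_nonneg (by linarith : (0:ℝ) ≤ -q) (by linarith : (0:ℝ) ≤ -(-B - p*A)),
    mul_pos (by linarith : (0:ℝ) < -r - p*q) (by linarith : (0:ℝ) < -A)]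

lemma cover5 (hp : p ≤ 1) (hr1 : r ≤ -1) (hr2 : r ≤ -p*q - 2) (ht1 : t ≤ -2)
    (hD : 2 ≤ q*t - r*s) (A B : ℝ) :
    (0 ≤ B ∧ 0 ≤ A) ∨ (0 ≤ -A ∧ 0 ≤ p*A + B) ∨ (0 ≤ -B - p*A ∧ 0 ≤ r*A - q*B) ∨
    (0 ≤ q*B - r*A ∧ 0 ≤ t*A - s*B) ∨ (0 ≤ s*B - t*A ∧ 0 ≤ -B) := by
  rcases le_or_gt 0 B with hB | hB
  · rcases le_or_gt 0 A with hA | hA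
    · exact Or.inl ⟨hB, hA⟩
    rcases le_or_gt 0 (p*A + B) with h1 | h1
    · exact Or.inr (Or.inl ⟨by linarith, h1⟩)
    rcases le_or_gt 0 (r*A - q*B) with h2 | h2
    · exact Or.inr (Or.inr (Or.inl ⟨by linarith, h2⟩))
    rcases le_or_gt 0 (t*A - s*B) with h3 | h3
    · exact Or.inr (Or.inr (Or.inr (Or.inl ⟨by linarith, h3⟩)))
    · exfalso
      rcases le_or_gt 0 q with hq | hq
      · nlinarith [mul_pos (by linarith : (0:ℝ) < -p*q - r) (by linarith : (0:ℝ) < -A),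
          mul_nonneg hq (by linarith : (0:ℝ) ≤ -B - p*A)]
      · nlinarith [mul_nonneg (by linarith : (0:ℝ) ≤ -q) hB,
          mul_pos (by linarith : (0:ℝ) < -r) (by linarith : (0:ℝ) < -A)]
  · rcases le_or_gt 0 (s*B - t*A) with h4 | h4
    · exact Or.inr (Or.inr (Or.inr (Or.inr ⟨h4, by linarith⟩)))
    rcases le_or_gt 0 (q*B - r*A) with h3 | h3
    · exact Or.inr (Or.inr (Or.inr (Or.inl ⟨h3, by linarith⟩)))
    rcases le_or_gt 0 (-B - p*A) with h2 | h2
    · exact Or.inr (Or.inr (Or.inl ⟨h2, by linarith⟩))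
    rcases le_or_gt 0 (-A) with h1 | h1
    · exact Or.inr (Or.inl ⟨h1, by linarith⟩)
    · exfalso
      rcases le_or_gt 0 q with hq | hq
      · nlinarith [mul_pos (by linarith : (0:ℝ) < -p*q - r) (by linarith : (0:ℝ) < A),
          mul_nonneg hq (by linarith : (0:ℝ) ≤ -(-B - p*A))]
      · nlinarith [mul_pos (by linarith : (0:ℝ) < -q) (by linarith : (0:ℝ) < -B),
          mul_pos (by linarith : (0:ℝ) < -r) (by linarith : (0:ℝ) < A)]
end pairs

lemma cone_mem_elim (a b c d : ℤ) (hD : (0:ℤ) < detZ (a,b) (c,d)) (A B : ℝ)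
    (h : ((A, B) : ℝ × ℝ) ∈ coneOf (a,b) (c,d)) :
    0 ≤ (a:ℝ) * B - (b:ℝ) * A ∧ 0 ≤ (d:ℝ) * A - (c:ℝ) * B := by
  obtain ⟨u1, u2⟩ := (mem_coneOf_iff _ _ hD _).mp h
  simp only [detR, toR2] at u1 u2
  constructor <;> linarith

lemma cone_mem_intro (a b c d : ℤ) (hD : (0:ℤ) < detZ (a,b) (c,d)) (A B : ℝ)
    (h1 : 0 ≤ (a:ℝ) * B - (b:ℝ) * A) (h2 : 0 ≤ (d:ℝ) * A - (c:ℝ) * B) :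
    ((A, B) : ℝ × ℝ) ∈ coneOf (a,b) (c,d) := by
  refine (mem_coneOf_iff _ _ hD _).mpr ⟨?_, ?_⟩ <;> simp only [detR, toR2] <;> linarith

lemma interior_mem_intro (a b c d : ℤ) (hD : (0:ℤ) < detZ (a,b) (c,d)) (A B : ℝ)
    (h1 : 0 < (a:ℝ) * B - (b:ℝ) * A) (h2 : 0 < (d:ℝ) * A - (c:ℝ) * B) :
    ((A, B) : ℝ × ℝ) ∈ interior (coneOf (a,b) (c,d)) := by
  refine strict_subset_interior _ _ hD ⟨?_, ?_⟩ <;> simp only [detR, toR2, Set.mem_setOf_eq]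
    <;> linarith

lemma disj_adj (u w z : ℤ × ℤ) (hD1 : (0:ℤ) < detZ u w) (hD2 : (0:ℤ) < detZ w z)
    (hw : ((w.1:ℝ) ≠ 0 ∨ (w.2:ℝ) ≠ 0)) :
    interior (coneOf u w) ∩ interior (coneOf w z) = ∅ := by
  rw [← interior_inter]
  apply interior_empty_of_line _ (-(w.2:ℝ)) (w.1:ℝ)
    (Or.imp (fun h => neg_ne_zero.mpr h) id hw.symm)
  rintro x ⟨h1, h2⟩
  have a1 := ((mem_coneOf_iff u w hD1 x).mp h1).2
  have a2 := ((mem_coneOf_iff w z hD2 x).mp h2).1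
  simp only [detR, toR2] at a1 a2
  linarith

set_option maxHeartbeats 1000000 in
/-- Characterization of the pentagonal LDP fan data with exactly three singular cones. -/
theorem pentagon_three_singular (p q r s t : ℤ)
    (hqr : Int.gcd q r = 1) (hst : Int.gcd s t = 1) :
    (IsLDPFanData 5 (data5' p q r s t) ∧ numSingular 5 (data5' p q r s t) = 3) ↔
      (p ≤ 1 ∧
       r ≤ min (min (-1) (-p * q - 2))
             (min (q - p * q - 1) (-p * q + q * t - r * s + p * s + t - 1)) ∧
       t ≤ min (min (-2) (-s - 1)) (q * t - r * s + r - 1) ∧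
       2 ≤ q * t - r * s) := by
  have five : ∀ k : ZMod 5, k = 0 ∨ k = 1 ∨ k = 2 ∨ k = 3 ∨ k = 4 := by decide
  constructor
  · rintro ⟨⟨⟨-, hprim, hdet, hcover, hdisj⟩, hf⟩, hsing⟩
    have hf0 : (1:ℤ) ≤ (s*0 - t*1) + (1*1 - 0*0) + (0*t - 1*s) := hf 0
    have hf1 : (1:ℤ) ≤ (1*1 - 0*0) + (0*p - 1*(-1)) + ((-1)*0 - p*1) := hf 1
    have hf2 : (1:ℤ) ≤ (0*p - 1*(-1)) + ((-1)*r - p*q) + (q*1 - r*0) := hf 2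
    have hf3 : (1:ℤ) ≤ ((-1)*r - p*q) + (q*t - r*s) + (s*p - t*(-1)) := hf 3
    have hf4 : (1:ℤ) ≤ (q*t - r*s) + (s*0 - t*1) + (1*r - 0*q) := hf 4
    have hsub : {i : ZMod 5 |
        2 ≤ detZ (data5' p q r s t i) (data5' p q r s t (i+1))} ⊆ ({2,3,4} : Set (ZMod 5)) := by
      intro i hi
      simp only [Set.mem_setOf_eq] at hi
      rcases five i with rfl | rfl | rfl | rfl | rfl
      · have h' : (2:ℤ) ≤ 1*1 - 0*0 := hi; norm_num at h'
      · have h' : (2:ℤ) ≤ 0*p - 1*(-1) := hi; omega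
      · simp
      · simp
      · simp
    have hcard : ({2,3,4} : Set (ZMod 5)).ncard = 3 :=
      Set.ncard_eq_three.mpr ⟨2, 3, 4, by decide, by decide, by decide, rfl⟩
    have hSeq : {i : ZMod 5 |
        2 ≤ detZ (data5' p q r s t i) (data5' p q r s t (i+1))} = ({2,3,4} : Set (ZMod 5)) := by
      apply Set.eq_of_subset_of_ncard_le hsub _ (Set.toFinite _)
      rw [hcard]
      exact le_of_eq hsing.symm
    have h23 : (2:ℤ) ≤ (-1)*r - p*q := by
      have h : (2:ZMod 5) ∈ {i : ZMod 5 |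
          2 ≤ detZ (data5' p q r s t i) (data5' p q r s t (i+1))} := by rw [hSeq]; simp
      exact h
    have h34 : (2:ℤ) ≤ q*t - r*s := by
      have h : (3:ZMod 5) ∈ {i : ZMod 5 |
          2 ≤ detZ (data5' p q r s t i) (data5' p q r s t (i+1))} := by rw [hSeq]; simp
      exact h
    have h40 : (2:ℤ) ≤ s*0 - t*1 := by
      have h : (4:ZMod 5) ∈ {i : ZMod 5 |
          2 ≤ detZ (data5' p q r s t i) (data5' p q r s t (i+1))} := by rw [hSeq]; simp
      exact h
    have hp1 : p ≤ 1 := by linarith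
    have hr2 : r ≤ -p*q - 2 := by linarith
    have ht2 : t ≤ -2 := by linarith
    have hrq : r ≤ q - p*q := by linarith
    have hst0 : s + t ≤ 0 := by linarith
    have hr1 : r ≤ -1 := by
      rcases eq_or_lt_of_le hp1 with hpe | hpl
      · -- p = 1
        by_contra hcon
        push_neg at hcon
        have hr0 : r = 0 := by
          have h' : r ≤ q - p*q := hrq
          rw [hpe] at h'
          omega
        have hq1 : q.natAbs = 1 := by rwa [hr0, Int.gcd_zero_right] at hqr
        rcases Int.natAbs_eq_iff.mp hq1 with h | h <;> rw [h] at hr2 <;> omega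
      · -- p ≤ 0
        have hp0 : p ≤ 0 := by omega
        by_contra hcon
        push_neg at hcon
        have hrge : 0 ≤ r := by omega
        have hq1 : 1 ≤ q := by nlinarith
        have hrpos : 1 ≤ r := by
          rcases eq_or_lt_of_le hrge with h | h
          · exfalso; rw [← h] at h34; nlinarith
          · omega
        have hpq3 : p*q ≤ -3 := by linarith
        have hq1R : (1:ℝ) ≤ (q:ℝ) := by exact_mod_cast hq1
        have hr1R : (1:ℝ) ≤ (r:ℝ) := by exact_mod_cast hrpos
        have hpq3R : (p:ℝ)*(q:ℝ) ≤ -3 := by exact_mod_cast hpq3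
        have hD01 : (0:ℤ) < detZ ((1:ℤ),(0:ℤ)) ((0:ℤ),(1:ℤ)) := by norm_num [detZ]
        have hD23 : (0:ℤ) < detZ ((-1:ℤ),p) (q,r) := by
          show (0:ℤ) < (-1)*r - p*q; linarith
        have m0 := interior_mem_intro 1 0 0 1 hD01 (q:ℝ) (1/2)
          (by push_cast; linarith) (by push_cast; linarith)
        have m2 := interior_mem_intro (-1) p q r hD23 (q:ℝ) (1/2)
          (by push_cast; linarith) (by push_cast; nlinarith)
        have hemp := hdisj 0 2 (by decide)
        exact (Set.eq_empty_iff_forall_notMem.mp hemp ((q:ℝ), (1/2:ℝ))) ⟨m0, m2⟩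
    refine ⟨hp1, le_min (le_min hr1 (by linarith)) (le_min ?_ (by linarith)),
      le_min (le_min ht2 ?_) (by linarith), by linarith⟩
    · -- r ≤ q - p*q - 1
      by_contra hcon
      push_neg at hcon
      have hre : r = q - p*q := le_antisymm hrq (by linarith)
      have hdvd : q ∣ r := ⟨1 - p, by rw [hre]; ring⟩
      have hq1 : q.natAbs = 1 := by rwa [Int.gcd_eq_natAbs_left hdvd] at hqr
      rcases Int.natAbs_eq_iff.mp hq1 with h | h <;> rw [h] at hre hr2 <;> omega
    · -- t ≤ -s - 1
      by_contra hcon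
      push_neg at hcon
      have hte : t = -s := by omega
      have hdvd : s ∣ t := ⟨-1, by omega⟩
      have hs1 : s.natAbs = 1 := by rwa [Int.gcd_eq_natAbs_left hdvd] at hst
      rcases Int.natAbs_eq_iff.mp hs1 with h | h <;> omega
  · rintro ⟨hp1, hrm, htm, hD45⟩
    obtain ⟨ha, hb⟩ := le_min_iff.mp hrm
    obtain ⟨hr1, hr2⟩ := le_min_iff.mp ha
    obtain ⟨hr3, hr4⟩ := le_min_iff.mp hb
    obtain ⟨hc, ht3⟩ := le_min_iff.mp htm
    obtain ⟨ht1, ht2⟩ := le_min_iff.mp hc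
    have hpR : (p:ℝ) ≤ 1 := by exact_mod_cast hp1
    have hr1R : (r:ℝ) ≤ -1 := by exact_mod_cast hr1
    have hr2R : (r:ℝ) ≤ -(p:ℝ)*(q:ℝ) - 2 := by exact_mod_cast hr2
    have ht1R : (t:ℝ) ≤ -2 := by exact_mod_cast ht1
    have hDR : (2:ℝ) ≤ (q:ℝ)*(t:ℝ) - (r:ℝ)*(s:ℝ) := by exact_mod_cast hD45
    have htR0 : (t:ℝ) ≠ 0 := by
      have : (t:ℝ) < 0 := by linarith
      exact ne_of_lt this
    have hrR0 : (r:ℝ) ≠ 0 := by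
      have : (r:ℝ) < 0 := by linarith
      exact ne_of_lt this
    have hD01 : (0:ℤ) < detZ ((1:ℤ),(0:ℤ)) ((0:ℤ),(1:ℤ)) := by norm_num [detZ]
    have hD12 : (0:ℤ) < detZ ((0:ℤ),(1:ℤ)) ((-1:ℤ),p) := by
      show (0:ℤ) < 0*p - 1*(-1); omega
    have hD23 : (0:ℤ) < detZ ((-1:ℤ),p) (q,r) := by
      show (0:ℤ) < (-1)*r - p*q; linarith
    have hD34 : (0:ℤ) < detZ (q,r) (s,t) := by
      show (0:ℤ) < q*t - r*s; linarith
    have hD40 : (0:ℤ) < detZ (s,t) ((1:ℤ),(0:ℤ)) := by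
      show (0:ℤ) < s*0 - t*1; linarith
    -- the ten disjointness facts
    have d01 := disj_adj (1,0) (0,1) (-1,p) hD01 hD12 (Or.inr (by norm_num))
    have d12 := disj_adj (0,1) (-1,p) (q,r) hD12 hD23 (Or.inl (by norm_num))
    have d23 := disj_adj (-1,p) (q,r) (s,t) hD23 hD34 (Or.inr hrR0)
    have d34 := disj_adj (q,r) (s,t) (1,0) hD34 hD40 (Or.inr htR0)
    have d40 := disj_adj (s,t) (1,0) (0,1) hD40 hD01 (Or.inl (by norm_num))
    have d02 : interior (coneOf ((1:ℤ),(0:ℤ)) ((0:ℤ),(1:ℤ))) ∩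
        interior (coneOf ((-1:ℤ),p) (q,r)) = ∅ := by
      rw [← interior_inter]
      apply interior_empty_of_line _ 0 1 (Or.inr one_ne_zero)
      rintro ⟨A,B⟩ ⟨m1, m2⟩
      obtain ⟨a1, a2⟩ := cone_mem_elim 1 0 0 1 hD01 A B m1
      obtain ⟨b1, b2⟩ := cone_mem_elim (-1) p q r hD23 A B m2
      push_cast at a1 a2 b1 b2
      have hB := pair02 (p := (p:ℝ)) (q := (q:ℝ)) (A := A) (B := B) hr1R hr2R
        (by linarith) (by linarith) (by linarith) (by linarith)
      simp only []
      linarith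
    have d13 : interior (coneOf ((0:ℤ),(1:ℤ)) ((-1:ℤ),p)) ∩
        interior (coneOf (q,r) (s,t)) = ∅ := by
      rw [← interior_inter]
      apply interior_empty_of_line _ (-(r:ℝ)) (q:ℝ) (Or.inl (neg_ne_zero.mpr hrR0))
      rintro ⟨A,B⟩ ⟨m1, m2⟩
      obtain ⟨a1, a2⟩ := cone_mem_elim 0 1 (-1) p hD12 A B m1
      obtain ⟨b1, b2⟩ := cone_mem_elim q r s t hD34 A B m2
      push_cast at a1 a2 b1 b2
      have hk := pair13 (A := A) (B := B) hr1R hr2R ht1R hDR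
        (by linarith) (by linarith) (by linarith) (by linarith)
      simp only []
      linarith
    have d24 : interior (coneOf ((-1:ℤ),p) (q,r)) ∩
        interior (coneOf (s,t) ((1:ℤ),(0:ℤ))) = ∅ := by
      rw [← interior_inter]
      apply interior_empty_of_line _ 0 1 (Or.inr one_ne_zero)
      rintro ⟨A,B⟩ ⟨m1, m2⟩
      obtain ⟨a1, a2⟩ := cone_mem_elim (-1) p q r hD23 A B m1
      obtain ⟨b1, b2⟩ := cone_mem_elim s t 1 0 hD40 A B m2
      push_cast at a1 a2 b1 b2
      have hB := pair24 (p := (p:ℝ)) (q := (q:ℝ)) (s := (s:ℝ)) (A := A) (B := B) hr1R ht1R hDR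
        (by linarith) (by linarith) (by linarith) (by linarith)
      simp only []
      linarith
    have d30 : interior (coneOf (q,r) (s,t)) ∩
        interior (coneOf ((1:ℤ),(0:ℤ)) ((0:ℤ),(1:ℤ))) = ∅ := by
      rw [← interior_inter]
      apply interior_empty_of_line _ 0 1 (Or.inr one_ne_zero)
      rintro ⟨A,B⟩ ⟨m1, m2⟩
      obtain ⟨a1, a2⟩ := cone_mem_elim q r s t hD34 A B m1
      obtain ⟨b1, b2⟩ := cone_mem_elim 1 0 0 1 hD01 A B m2
      push_cast at a1 a2 b1 b2
      have hB := pair30 (q := (q:ℝ)) (s := (s:ℝ)) (A := A) (B := B) hr1R ht1R hDR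
        (by linarith) (by linarith) (by linarith) (by linarith)
      simp only []
      linarith
    have d41 : interior (coneOf (s,t) ((1:ℤ),(0:ℤ))) ∩
        interior (coneOf ((0:ℤ),(1:ℤ)) ((-1:ℤ),p)) = ∅ := by
      rw [← interior_inter]
      apply interior_empty_of_line _ (-(t:ℝ)) (s:ℝ) (Or.inl (neg_ne_zero.mpr htR0))
      rintro ⟨A,B⟩ ⟨m1, m2⟩
      obtain ⟨a1, a2⟩ := cone_mem_elim s t 1 0 hD40 A B m1
      obtain ⟨b1, b2⟩ := cone_mem_elim 0 1 (-1) p hD12 A B m2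
      push_cast at a1 a2 b1 b2
      have hk := pair41 (A := A) (B := B) hr1R hr2R ht1R hDR
        (by linarith) (by linarith) (by linarith) (by linarith)
      simp only []
      linarith
    refine ⟨⟨⟨by norm_num, ?_, ?_, ?_, ?_⟩, ?_⟩, ?_⟩
    · -- primitive
      intro i
      rcases five i with rfl | rfl | rfl | rfl | rfl
      · show Int.gcd 1 0 = 1; decide
      · show Int.gcd 0 1 = 1; decide
      · show Int.gcd (-1) p = 1
        simp [Int.gcd]
      · exact hqr
      · exact hst
    · -- dets ≥ 1
      intro i
      rcases five i with rfl | rfl | rfl | rfl | rfl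
      · show (1:ℤ) ≤ 1*1 - 0*0; norm_num
      · show (1:ℤ) ≤ 0*p - 1*(-1); omega
      · show (1:ℤ) ≤ (-1)*r - p*q; linarith
      · show (1:ℤ) ≤ q*t - r*s; linarith
      · show (1:ℤ) ≤ s*0 - t*1; linarith
    · -- covering
      apply Set.eq_univ_of_forall
      rintro ⟨A, B⟩
      rcases cover5 hpR hr1R hr2R ht1R hDR A B with
        ⟨h1,h2⟩ | ⟨h1,h2⟩ | ⟨h1,h2⟩ | ⟨h1,h2⟩ | ⟨h1,h2⟩
      · exact Set.mem_iUnion.mpr ⟨0, cone_mem_intro 1 0 0 1 hD01 A B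
          (by push_cast; linarith) (by push_cast; linarith)⟩
      · exact Set.mem_iUnion.mpr ⟨1, cone_mem_intro 0 1 (-1) p hD12 A B
          (by push_cast; linarith) (by push_cast; linarith)⟩
      · exact Set.mem_iUnion.mpr ⟨2, cone_mem_intro (-1) p q r hD23 A B
          (by push_cast; linarith) (by push_cast; linarith)⟩
      · exact Set.mem_iUnion.mpr ⟨3, cone_mem_intro q r s t hD34 A B
          (by push_cast; linarith) (by push_cast; linarith)⟩
      · exact Set.mem_iUnion.mpr ⟨4, cone_mem_intro s t 1 0 hD40 A B
          (by push_cast; linarith) (by push_cast; linarith)⟩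
    · -- disjoint interiors
      intro i j hij
      have e0 : data5' p q r s t 0 = (1,0) := rfl
      have e1 : data5' p q r s t 1 = (0,1) := rfl
      have e2 : data5' p q r s t 2 = (-1,p) := rfl
      have e3 : data5' p q r s t 3 = (q,r) := rfl
      have e4 : data5' p q r s t 4 = (s,t) := rfl
      have a0 : ((0:ZMod 5)+1) = 1 := rfl
      have a1 : ((1:ZMod 5)+1) = 2 := rfl
      have a2 : ((2:ZMod 5)+1) = 3 := rfl
      have a3 : ((3:ZMod 5)+1) = 4 := rfl
      have a4 : ((4:ZMod 5)+1) = 0 := rfl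
      rcases five i with rfl | rfl | rfl | rfl | rfl <;>
        rcases five j with rfl | rfl | rfl | rfl | rfl <;>
        simp only [a0, a1, a2, a3, a4, e0, e1, e2, e3, e4] <;>
        first
          | exact absurd rfl hij
          | exact d01 | exact d12 | exact d23 | exact d34 | exact d40
          | exact d02 | exact d13 | exact d24 | exact d30 | exact d41
          | (rw [Set.inter_comm]
             first
               | exact d01 | exact d12 | exact d23 | exact d34 | exact d40
               | exact d02 | exact d13 | exact d24 | exact d30 | exact d41)
    · -- fanF
      intro i
      rcases five i with rfl | rfl | rfl | rfl | rfl
      · show (1:ℤ) ≤ (s*0 - t*1) + (1*1 - 0*0) + (0*t - 1*s); linarith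
      · show (1:ℤ) ≤ (1*1 - 0*0) + (0*p - 1*(-1)) + ((-1)*0 - p*1); linarith
      · show (1:ℤ) ≤ (0*p - 1*(-1)) + ((-1)*r - p*q) + (q*1 - r*0); linarith
      · show (1:ℤ) ≤ ((-1)*r - p*q) + (q*t - r*s) + (s*p - t*(-1)); linarith
      · show (1:ℤ) ≤ (q*t - r*s) + (s*0 - t*1) + (1*r - 0*q); linarith
    · -- numSingular
      show {i : ZMod 5 |
        2 ≤ detZ (data5' p q r s t i) (data5' p q r s t (i+1))}.ncard = 3
      have hSeq : {i : ZMod 5 |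
          2 ≤ detZ (data5' p q r s t i) (data5' p q r s t (i+1))} = ({2,3,4} : Set (ZMod 5)) := by
        ext i
        simp only [Set.mem_setOf_eq, Set.mem_insert_iff, Set.mem_singleton_iff]
        rcases five i with rfl | rfl | rfl | rfl | rfl
        · exact iff_of_false (fun h => by have h' : (2:ℤ) ≤ 1*1 - 0*0 := h; norm_num at h')
            (by decide)
        · exact iff_of_false (fun h => by have h' : (2:ℤ) ≤ 0*p - 1*(-1) := h; omega)
            (by decide)
        · exact iff_of_true (show (2:ℤ) ≤ (-1)*r - p*q by linarith) (by decide)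
        · exact iff_of_true (show (2:ℤ) ≤ q*t - r*s from hD45) (by decide)
        · exact iff_of_true (show (2:ℤ) ≤ s*0 - t*1 by linarith) (by decide)
      rw [hSeq]
      exact Set.ncard_eq_three.mpr ⟨2, 3, 4, by decide, by decide, by decide, rfl⟩
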